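/- With σ₁,…,σ_{w−1}, τ as above, the permutation σ = (τ σ_{w−1}⋯σ₂σ₁σ₂⋯σ_{w−1})² of {0,1}^n flips coordinate c of x if and only if (x_{j₁},…,x_{j_w}) = (b₁,…,b_w), and leaves all other coordinates (including the scratch coordinates s₁,…,s_{w−1}) unchanged; i.e., σ is a w-controlled NOT gate implemented by 4(w−1)+2 = O(w) width-2 simple permutations. -/

import Mathlib

/-- The permutation of {0,1}^n that flips coordinate s iff `cond` holds of the input. -/
def flipIf {n : ℕ} (s : Fin n) (cond : (Fin n → Bool) → Bool) :
    (Fin n → Bool) → (Fin n → Bool) :=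
  fun x m => if m = s then xor (x s) (cond x) else x m

private lemma bxor_aux1 (a p q e : Bool) :
    xor (xor a (p && e)) ((xor p q) && e) = xor a (q && e) := by
  cases a <;> cases p <;> cases q <;> cases e <;> rfl

private lemma bxor_aux2 (a p q e : Bool) :
    xor (xor a ((xor p q) && e)) (p && e) = xor a (q && e) := by
  cases a <;> cases p <;> cases q <;> cases e <;> rfl

private lemma bxor_cancel (a q : Bool) : xor (xor a q) q = a := by
  cases a <;> cases q <;> rfl

private lemma decide_exists_unique {n v : ℕ} (s : Fin v → Fin n) (hs : Function.Injective s)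
    (P : Fin v → Prop) [DecidablePred P] (kk : ℕ) (t0 : Fin v) (h0 : (t0 : ℕ) < kk) :
    decide (∃ t : Fin v, (t : ℕ) < kk ∧ s t = s t0 ∧ P t) = decide (P t0) := by
  apply decide_eq_decide.mpr
  constructor
  · rintro ⟨t, -, hts, hp⟩
    rwa [hs hts] at hp
  · intro hp
    exact ⟨t0, h0, rfl, hp⟩

private lemma decide_exists_false' {n v : ℕ} (s : Fin v → Fin n) (m : Fin n)
    (P : Fin v → Prop) [DecidablePred P] (kk : ℕ) (h : ∀ t : Fin v, (t : ℕ) < kk → s t ≠ m) :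
    decide (∃ t : Fin v, (t : ℕ) < kk ∧ s t = m ∧ P t) = false := by
  apply decide_eq_false
  rintro ⟨t, ht, hts, -⟩
  exact h t ht hts

/-- Key ladder lemma: closed form for the down-up cascade of Toffoli-type steps. -/
theorem ladder_eq {n v : ℕ} (hv : 0 < v) (j : Fin (v + 1) → Fin n) (s : Fin v → Fin n)
    (b : Fin (v + 1) → Bool) (hs : Function.Injective s) (hjs : ∀ a b', j a ≠ s b')
    (σ : ℕ → (Fin n → Bool) → (Fin n → Bool))
    (hσ : ∀ t (h : t < v), σ t = flipIf (s ⟨t, h⟩)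
      (fun x => (decide (t = 0) || x (s ⟨t - 1, lt_of_le_of_lt (Nat.sub_le t 1) h⟩))
        && (x (j ⟨t, Nat.lt_succ_of_lt h⟩) == b ⟨t, Nat.lt_succ_of_lt h⟩)))
    (k : ℕ) (hk1 : 1 ≤ k) :
    k ≤ v → ∀ y : Fin n → Bool,
    ((List.range k).reverse ++ List.range' 1 (k - 1)).foldl (fun y t => σ t y) y
      = fun m => xor (y m)
          (decide (∃ t : Fin v, (t : ℕ) < k ∧ s t = m ∧
            ∀ u : Fin (v + 1), (u : ℕ) ≤ (t : ℕ) → y (j u) = b u)) := by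
  induction k, hk1 using Nat.le_induction with
  | base =>
    intro _ y
    have hlist : ((List.range 1).reverse ++ List.range' 1 (1 - 1)) = [0] := rfl
    rw [hlist]
    show σ 0 y = _
    rw [hσ 0 hv]
    funext m
    by_cases hm : m = s ⟨0, hv⟩
    · subst hm
      have hiff : (∃ t : Fin v, (t : ℕ) < 1 ∧ s t = s ⟨0, hv⟩ ∧
          ∀ u : Fin (v + 1), (u : ℕ) ≤ (t : ℕ) → y (j u) = b u)
          ↔ (y (j ⟨0, Nat.succ_pos v⟩) = b ⟨0, Nat.succ_pos v⟩) := by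
        constructor
        · rintro ⟨t, ht1, -, hA⟩
          exact hA ⟨0, Nat.succ_pos v⟩ (Nat.zero_le _)
        · intro h
          refine ⟨⟨0, hv⟩, Nat.zero_lt_one, rfl, ?_⟩
          intro u hu
          have hu' : (u : ℕ) ≤ 0 := hu
          have hu0 : u = ⟨0, Nat.succ_pos v⟩ := Fin.ext (show (u : ℕ) = 0 by omega)
          rw [hu0]; exact h
      have hdec : decide (∃ t : Fin v, (t : ℕ) < 1 ∧ s t = s ⟨0, hv⟩ ∧
          ∀ u : Fin (v + 1), (u : ℕ) ≤ (t : ℕ) → y (j u) = b u)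
          = decide (y (j ⟨0, Nat.succ_pos v⟩) = b ⟨0, Nat.succ_pos v⟩) :=
        decide_eq_decide.mpr hiff
      rw [hdec]
      simp [flipIf, Bool.beq_eq_decide_eq]
      exact decide_eq_decide.mpr Iff.rfl
    · have hfalse : ¬ (∃ t : Fin v, (t : ℕ) < 1 ∧ s t = m ∧
          ∀ u : Fin (v + 1), (u : ℕ) ≤ (t : ℕ) → y (j u) = b u) := by
        rintro ⟨t, ht1, hts, -⟩
        apply hm
        have ht0 : t = ⟨0, hv⟩ := Fin.ext (show (t : ℕ) = 0 by omega)
        rw [ht0] at hts; exact hts.symm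
      rw [decide_eq_false hfalse]
      simp [flipIf, if_neg hm]
  | succ k hk ih =>
    intro hk1v y
    obtain ⟨k', rfl⟩ : ∃ k'', k = k'' + 1 := ⟨k - 1, by omega⟩
    have hKv : k' + 1 < v := by omega
    have hK'v : k' < v := by omega
    have hlist : ((List.range (k' + 1 + 1)).reverse ++ List.range' 1 (k' + 1 + 1 - 1))
        = (k' + 1) :: (((List.range (k' + 1)).reverse ++ List.range' 1 (k' + 1 - 1)) ++ [k' + 1]) := by
      have h1 : List.range' 1 (k' + 1) = List.range' 1 k' ++ [k' + 1] := by
        rw [List.range'_concat]; norm_num [Nat.add_comm]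
      simp [List.range_succ, h1]
    rw [hlist, List.foldl_cons, List.foldl_append, ih (by omega) (σ (k' + 1) y)]
    simp only [List.foldl_cons, List.foldl_nil]
    rw [hσ _ hKv]
    have hy0j : ∀ u : Fin (v + 1), (σ (k' + 1) y) (j u) = y (j u) := by
      intro u
      rw [hσ _ hKv]
      simp [flipIf, hjs u ⟨k' + 1, hKv⟩]
    funext m
    have hne0 : (k' + 1 = 0) = False := by simp
    have hssne : s ⟨k', hK'v⟩ ≠ s ⟨k' + 1, hKv⟩ := by
      intro h
      have h2 := hs h
      simp only [Fin.mk.injEq] at h2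
      omega
    simp only [flipIf, Nat.add_sub_cancel, hne0, decide_false, Bool.false_or, hjs,
      if_false, ite_false, hssne, Bool.xor_false, if_true, ite_true]
    have hD1 : decide (∃ t : Fin v, (t : ℕ) < k' + 1 ∧ s t = s ⟨k' + 1, hKv⟩ ∧
        ∀ u : Fin (v + 1), (u : ℕ) ≤ (t : ℕ) → y (j u) = b u) = false := by
      apply decide_exists_false'
      intro t ht hts
      have h2 := hs hts
      have h3 : (t : ℕ) = k' + 1 := by rw [h2]
      omega
    have hD2 : decide (∃ t : Fin v, (t : ℕ) < k' + 1 ∧ s t = j ⟨k' + 1, Nat.lt_succ_of_lt hKv⟩ ∧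
        ∀ u : Fin (v + 1), (u : ℕ) ≤ (t : ℕ) → y (j u) = b u) = false := by
      apply decide_exists_false'
      intro t _ hts
      exact hjs _ t hts.symm
    have hD3 : decide (∃ t : Fin v, (t : ℕ) < k' + 1 ∧ s t = s ⟨k', hK'v⟩ ∧
        ∀ u : Fin (v + 1), (u : ℕ) ≤ (t : ℕ) → y (j u) = b u)
        = decide (∀ u : Fin (v + 1), (u : ℕ) ≤ k' → y (j u) = b u) :=
      decide_exists_unique s hs _ _ ⟨k', hK'v⟩ (Nat.lt_succ_self k')
    have hD4 : decide (∃ t : Fin v, (t : ℕ) < k' + 1 + 1 ∧ s t = s ⟨k' + 1, hKv⟩ ∧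
        ∀ u : Fin (v + 1), (u : ℕ) ≤ (t : ℕ) → y (j u) = b u)
        = decide (∀ u : Fin (v + 1), (u : ℕ) ≤ k' + 1 → y (j u) = b u) :=
      decide_exists_unique s hs _ _ ⟨k' + 1, hKv⟩ (Nat.lt_succ_self _)
    have hsplit : decide (∀ u : Fin (v + 1), (u : ℕ) ≤ k' + 1 → y (j u) = b u)
        = (decide (∀ u : Fin (v + 1), (u : ℕ) ≤ k' → y (j u) = b u)
            && (y (j ⟨k' + 1, Nat.lt_succ_of_lt hKv⟩) == b ⟨k' + 1, Nat.lt_succ_of_lt hKv⟩)) := by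
      rw [Bool.beq_eq_decide_eq, ← Bool.decide_and]
      apply decide_eq_decide.mpr
      constructor
      · intro h
        exact ⟨fun u hu => h u (by omega), h _ (Nat.le_refl _)⟩
      · rintro ⟨h1, h2⟩ u hu
        by_cases hcase : (u : ℕ) ≤ k'
        · exact h1 u hcase
        · have hu1 : u = ⟨k' + 1, Nat.lt_succ_of_lt hKv⟩ := Fin.ext (show (u : ℕ) = k' + 1 by omega)
          rw [hu1]; exact h2
    by_cases hm : m = s ⟨k' + 1, hKv⟩
    · rw [if_pos hm, hm, hD1, hD3, hD2, hD4, hsplit]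
      simp only [Bool.xor_false]
      exact bxor_aux1 _ _ _ _
    · rw [if_neg hm, if_neg hm]
      have hiff2 : (∃ t : Fin v, (t : ℕ) < k' + 1 + 1 ∧ s t = m ∧
          ∀ u : Fin (v + 1), (u : ℕ) ≤ (t : ℕ) → y (j u) = b u)
          ↔ (∃ t : Fin v, (t : ℕ) < k' + 1 ∧ s t = m ∧
          ∀ u : Fin (v + 1), (u : ℕ) ≤ (t : ℕ) → y (j u) = b u) := by
        constructor
        · rintro ⟨t, ht, hts, hA⟩
          refine ⟨t, ?_, hts, hA⟩
          have htne : (t : ℕ) ≠ k' + 1 := by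
            intro h
            apply hm
            rw [← hts]
            congr 1
            exact Fin.ext h
          omega
        · rintro ⟨t, ht, hts, hA⟩
          exact ⟨t, by omega, hts, hA⟩
      have hdec2 : decide (∃ t : Fin v, (t : ℕ) < k' + 1 + 1 ∧ s t = m ∧
          ∀ u : Fin (v + 1), (u : ℕ) ≤ (t : ℕ) → y (j u) = b u)
          = decide (∃ t : Fin v, (t : ℕ) < k' + 1 ∧ s t = m ∧
          ∀ u : Fin (v + 1), (u : ℕ) ≤ (t : ℕ) → y (j u) = b u) := decide_eq_decide.mpr hiff2
      rw [hdec2]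

/-- With distinct indices j₁,…,j_w, s₁,…,s_{w-1}, c (here w = v+1, 0-indexed) and bits
b₁,…,b_w, let σ_t flip s_t iff (t = 0 or x_{s_{t-1}} = 1) and x_{j_t} = b_t, and let
τ flip c iff x_{s_{w-1}} = 1 and x_{j_w} = b_w. Then the permutation
σ = (τ σ_{w-1}⋯σ₂σ₁σ₂⋯σ_{w-1})² flips coordinate c iff
(x_{j₁},…,x_{j_w}) = (b₁,…,b_w), and leaves all other coordinates (including the
scratch coordinates s₁,…,s_{w-1}) unchanged: a w-controlled NOT gate. -/
theorem controlled_not_implementation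
    {n v : ℕ} (hv : 0 < v) (j : Fin (v + 1) → Fin n) (s : Fin v → Fin n) (c : Fin n)
    (b : Fin (v + 1) → Bool)
    (hj : Function.Injective j) (hs : Function.Injective s)
    (hjs : ∀ a b', j a ≠ s b') (hjc : ∀ a, j a ≠ c) (hsc : ∀ a, s a ≠ c) :
    let σ : ℕ → (Fin n → Bool) → (Fin n → Bool) := fun t =>
      if h : t < v then
        flipIf (s ⟨t, h⟩)
          (fun x =>
            (decide (t = 0) || x (s ⟨t - 1, lt_of_le_of_lt (Nat.sub_le t 1) h⟩))
            && (x (j ⟨t, Nat.lt_succ_of_lt h⟩) == b ⟨t, Nat.lt_succ_of_lt h⟩))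
      else id
    let τ : (Fin n → Bool) → (Fin n → Bool) :=
      flipIf c (fun x =>
        x (s ⟨v - 1, by omega⟩) && (x (j ⟨v, by omega⟩) == b ⟨v, by omega⟩))
    let F : (Fin n → Bool) → (Fin n → Bool) := fun x =>
      τ (((List.range v).reverse ++ List.range' 1 (v - 1)).foldl (fun y t => σ t y) x)
    ∀ x, F (F x)
        = flipIf c (fun y => decide (∀ t : Fin (v + 1), y (j t) = b t)) x := by
  intro σ τ F x
  have hσ : ∀ t (h : t < v), σ t = flipIf (s ⟨t, h⟩)
      (fun x => (decide (t = 0) || x (s ⟨t - 1, lt_of_le_of_lt (Nat.sub_le t 1) h⟩))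
        && (x (j ⟨t, Nat.lt_succ_of_lt h⟩) == b ⟨t, Nat.lt_succ_of_lt h⟩)) :=
    fun t h => dif_pos h
  have hv1 : v - 1 < v := by omega
  have hvv : v < v + 1 := by omega
  have hτ : τ = flipIf c (fun x =>
      x (s ⟨v - 1, hv1⟩) && (x (j ⟨v, hvv⟩) == b ⟨v, hvv⟩)) := rfl
  have hF : ∀ y, F y = τ (((List.range v).reverse ++ List.range' 1 (v - 1)).foldl
      (fun y t => σ t y) y) := fun y => rfl
  have hlad := ladder_eq hv j s b hs hjs σ hσ v hv (le_refl v)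
  have hDj : ∀ (y : Fin n → Bool) (u : Fin (v + 1)),
      decide (∃ t : Fin v, (t : ℕ) < v ∧ s t = j u ∧
        ∀ u' : Fin (v + 1), (u' : ℕ) ≤ (t : ℕ) → y (j u') = b u') = false := by
    intro y u
    apply decide_exists_false'
    intro t _ hts
    exact hjs u t hts.symm
  have hDc : ∀ (y : Fin n → Bool),
      decide (∃ t : Fin v, (t : ℕ) < v ∧ s t = c ∧
        ∀ u' : Fin (v + 1), (u' : ℕ) ≤ (t : ℕ) → y (j u') = b u') = false := by
    intro y
    apply decide_exists_false'
    intro t _ hts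
    exact hsc t hts
  have hDs : ∀ (y : Fin n → Bool),
      decide (∃ t : Fin v, (t : ℕ) < v ∧ s t = s ⟨v - 1, hv1⟩ ∧
        ∀ u' : Fin (v + 1), (u' : ℕ) ≤ (t : ℕ) → y (j u') = b u')
      = decide (∀ u' : Fin (v + 1), (u' : ℕ) ≤ v - 1 → y (j u') = b u') :=
    fun y => decide_exists_unique s hs _ _ ⟨v - 1, hv1⟩ hv1
  have hx1 : F x = fun m => if m = c
      then x c ^^ ((x (s ⟨v - 1, hv1⟩)
        ^^ decide (∀ u' : Fin (v + 1), (u' : ℕ) ≤ v - 1 → x (j u') = b u'))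
        && (x (j ⟨v, hvv⟩) == b ⟨v, hvv⟩))
      else x m ^^ decide (∃ t : Fin v, (t : ℕ) < v ∧ s t = m ∧
        ∀ u' : Fin (v + 1), (u' : ℕ) ≤ (t : ℕ) → x (j u') = b u') := by
    rw [hF, hlad x, hτ]
    funext m
    simp only [flipIf]
    by_cases hm : m = c
    · rw [if_pos hm, if_pos hm, hDc x, hDs x, hDj x ⟨v, hvv⟩]
      simp only [Bool.xor_false]
    · rw [if_neg hm, if_neg hm]
  have hx1c : (F x) c = (x c ^^ ((x (s ⟨v - 1, hv1⟩)
      ^^ decide (∀ u' : Fin (v + 1), (u' : ℕ) ≤ v - 1 → x (j u') = b u'))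
      && (x (j ⟨v, hvv⟩) == b ⟨v, hvv⟩))) := by
    rw [hx1]
    show (if c = c then _ else _) = _
    rw [if_pos rfl]
  have hx1j : ∀ u, (F x) (j u) = x (j u) := by
    intro u
    rw [hx1]
    show (if j u = c then _ else _) = _
    rw [if_neg (hjc u), hDj x u, Bool.xor_false]
  have hx1m : ∀ m, m ≠ c → (F x) m = (x m ^^ decide (∃ t : Fin v, (t : ℕ) < v ∧ s t = m ∧
      ∀ u' : Fin (v + 1), (u' : ℕ) ≤ (t : ℕ) → x (j u') = b u')) := by
    intro m hm
    rw [hx1]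
    show (if m = c then _ else _) = _
    rw [if_neg hm]
  have hall : decide (∀ t : Fin (v + 1), x (j t) = b t)
      = (decide (∀ u' : Fin (v + 1), (u' : ℕ) ≤ v - 1 → x (j u') = b u')
        && (x (j ⟨v, hvv⟩) == b ⟨v, hvv⟩)) := by
    rw [Bool.beq_eq_decide_eq, ← Bool.decide_and]
    apply decide_eq_decide.mpr
    constructor
    · intro h
      exact ⟨fun u _ => h u, h _⟩
    · rintro ⟨h1, h2⟩ u
      by_cases hcase : (u : ℕ) ≤ v - 1
      · exact h1 u hcase
      · have hu : u = ⟨v, hvv⟩ := Fin.ext (show (u : ℕ) = v by omega)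
        rw [hu]; exact h2
  rw [hF (F x), hlad (F x), hτ]
  funext m
  simp only [flipIf, hx1j]
  by_cases hm : m = c
  · rw [if_pos hm, if_pos hm, hx1m (s ⟨v - 1, hv1⟩) (hsc _), hx1c, hDc x, hDs x,
      hDj x ⟨v, hvv⟩, hall]
    simp only [Bool.xor_false, bxor_cancel]
    exact bxor_aux2 _ _ _ _
  · rw [if_neg hm, if_neg hm, hx1m m hm, bxor_cancel]
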